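/- Let p ≥ 1, let Ā_1,…,Ā_p be continuous multilinear maps on ℝ^n (Ā_i being i-multilinear) with ‖Ā_i‖ ≤ L̄ for all i, where L̄ ≥ 1, let 0 < σ_min ≤ σ, and suppose s ∈ ℝ^n satisfies (σ / (p+1)!) ‖s‖^{p+1} < ΔT̄_p(s), where ΔT̄_p(s) = −∑_{i=1}^p Ā_i[s]^i / i!. Then ‖s‖ ≤ max( 2 L̄ (p+1)! / σ_min , (2 L̄ (p+1)! / σ_min)^{1/p} ). -/

import Mathlib

lemma sum_inv_factorial_le (p : ℕ) :
    ∑ i ∈ Finset.Icc 1 p, (1 / (i.factorial : ℝ)) ≤ 2 - 2 / ((p+1).factorial : ℝ) := by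
  induction p with
  | zero => simp
  | succ p ih =>
    rw [Finset.sum_Icc_succ_top (by omega)]
    have h1 : (0:ℝ) < ((p+1).factorial : ℝ) := by positivity
    have h2 : (0:ℝ) < ((p+2).factorial : ℝ) := by positivity
    have hfac : ((p+2).factorial : ℝ) = (p+2) * ((p+1).factorial : ℝ) := by
      push_cast [Nat.factorial_succ]; ring
    have key : 2 / ((p+2).factorial : ℝ) ≤ 1 / ((p+1).factorial : ℝ) := by
      rw [div_le_div_iff₀ h2 h1, hfac]
      nlinarith
    have e : p + 1 + 1 = p + 2 := rfl
    rw [e]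
    have r1 : (2:ℝ) / ((p+1).factorial : ℝ) = 2 * (1 / ((p+1).factorial : ℝ)) := by ring
    have r2 : (2:ℝ) / ((p+2).factorial : ℝ) = 2 * (1 / ((p+2).factorial : ℝ)) := by ring
    linarith



/-- The inexact Taylor decrement of degree `p` built from the
`i`-multilinear maps `A i` (the inexact `i`-th derivatives), evaluated at `s`:
`ΔT̄_p(s) = −∑_{i=1}^p Ā_i[s]^i / i!`. -/
noncomputable def taylorDecrement (n p : ℕ)
    (A : ∀ i : ℕ, ContinuousMultilinearMap ℝ
      (fun _ : Fin i => EuclideanSpace ℝ (Fin n)) ℝ)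
    (s : EuclideanSpace ℝ (Fin n)) : ℝ :=
  -∑ i ∈ Finset.Icc 1 p, (A i fun _ => s) / (i.factorial : ℝ)

/-- Upper bound on the step: if `‖Ā_i‖ ≤ L̄` for all `i`,
`0 < σ_min ≤ σ`, and `(σ/(p+1)!) ‖s‖^{p+1} < ΔT̄_p(s)`, then
`‖s‖ ≤ max(2 L̄ (p+1)!/σ_min, (2 L̄ (p+1)!/σ_min)^{1/p})`. -/
theorem step_norm_upper_bound (n p : ℕ) (hp : 1 ≤ p)
    (Abar : ∀ i : ℕ, ContinuousMultilinearMap ℝ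
      (fun _ : Fin i => EuclideanSpace ℝ (Fin n)) ℝ)
    (Lbar : ℝ) (hLbar : 1 ≤ Lbar)
    (hbd : ∀ i ∈ Finset.Icc 1 p, ‖Abar i‖ ≤ Lbar)
    (σ σmin : ℝ) (hσmin : 0 < σmin) (hσ : σmin ≤ σ)
    (s : EuclideanSpace ℝ (Fin n))
    (hs : σ / ((p + 1).factorial : ℝ) * ‖s‖ ^ (p + 1) <
      taylorDecrement n p Abar s) :
    ‖s‖ ≤ max (2 * Lbar * ((p + 1).factorial : ℝ) / σmin)
      ((2 * Lbar * ((p + 1).factorial : ℝ) / σmin) ^ ((1 : ℝ) / p)) := by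
  set t := ‖s‖ with ht
  have ht0 : 0 ≤ t := norm_nonneg s
  have hfac : (0:ℝ) < ((p+1).factorial : ℝ) := by positivity
  have hσ0 : (0:ℝ) < σ := lt_of_lt_of_le hσmin hσ
  have hL0 : (0:ℝ) < Lbar := by linarith
  set M := 2 * Lbar * ((p + 1).factorial : ℝ) / σmin with hMdef
  have hM0 : 0 < M := by positivity
  have hmax0 : 0 ≤ max t (t ^ p) := le_max_of_le_left ht0
  -- bound the decrement
  have hdec : taylorDecrement n p Abar s ≤ 2 * Lbar * max t (t ^ p) := by
    unfold taylorDecrement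
    have h1 : -∑ i ∈ Finset.Icc 1 p, (Abar i fun _ => s) / (i.factorial : ℝ)
        = ∑ i ∈ Finset.Icc 1 p, -((Abar i fun _ => s) / (i.factorial : ℝ)) := by
      rw [Finset.sum_neg_distrib]
    rw [h1]
    have step : ∀ i ∈ Finset.Icc 1 p, -((Abar i fun _ => s) / (i.factorial : ℝ))
        ≤ (Lbar * max t (t ^ p)) * (1 / (i.factorial : ℝ)) := by
      intro i hi
      obtain ⟨hi1, hip⟩ := Finset.mem_Icc.mp hi
      have hif : (0:ℝ) < (i.factorial : ℝ) := by positivity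
      have hb : ‖Abar i fun _ => s‖ ≤ ‖Abar i‖ * ∏ _j : Fin i, ‖s‖ :=
        (Abar i).le_opNorm _
      have hpow : (∏ _j : Fin i, ‖s‖) = t ^ i := by
        simp [Finset.prod_const, ht]
      have hti : t ^ i ≤ max t (t ^ p) := by
        rcases le_total t 1 with h1' | h1'
        · refine le_max_of_le_left ?_
          calc t ^ i ≤ t ^ 1 := pow_le_pow_of_le_one ht0 h1' hi1
            _ = t := pow_one t
        · exact le_max_of_le_right (pow_le_pow_right₀ h1' hip)
      have habs : |Abar i fun _ => s| ≤ Lbar * max t (t ^ p) := by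
        rw [← Real.norm_eq_abs]
        calc ‖Abar i fun _ => s‖ ≤ ‖Abar i‖ * ∏ _j : Fin i, ‖s‖ := hb
          _ = ‖Abar i‖ * t ^ i := by rw [hpow]
          _ ≤ Lbar * max t (t ^ p) := by
              apply mul_le_mul (hbd i hi) hti (by positivity) hL0.le
      have hneg : -(Abar i fun _ => s) ≤ Lbar * max t (t ^ p) :=
        (neg_le_abs _).trans habs
      calc -((Abar i fun _ => s) / (i.factorial : ℝ))
          = (-(Abar i fun _ => s)) / (i.factorial : ℝ) := by ring
        _ ≤ (Lbar * max t (t ^ p)) / (i.factorial : ℝ) := by gcongr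
        _ = (Lbar * max t (t ^ p)) * (1 / (i.factorial : ℝ)) := by ring
    have hsum := Finset.sum_le_sum step
    have hsum2 : ∑ i ∈ Finset.Icc 1 p, (Lbar * max t (t ^ p)) * (1 / (i.factorial : ℝ))
        = (Lbar * max t (t ^ p)) * ∑ i ∈ Finset.Icc 1 p, (1 / (i.factorial : ℝ)) := by
      rw [Finset.mul_sum]
    have hle2 : ∑ i ∈ Finset.Icc 1 p, (1 / (i.factorial : ℝ)) ≤ 2 := by
      have := sum_inv_factorial_le p
      have h2 : (0:ℝ) < 2 / ((p+1).factorial : ℝ) := by positivity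
      linarith
    calc ∑ i ∈ Finset.Icc 1 p, -((Abar i fun _ => s) / (i.factorial : ℝ))
        ≤ ∑ i ∈ Finset.Icc 1 p, (Lbar * max t (t ^ p)) * (1 / (i.factorial : ℝ)) := hsum
      _ = (Lbar * max t (t ^ p)) * ∑ i ∈ Finset.Icc 1 p, (1 / (i.factorial : ℝ)) := hsum2
      _ ≤ (Lbar * max t (t ^ p)) * 2 := by
          apply mul_le_mul_of_nonneg_left hle2 (by positivity)
      _ = 2 * Lbar * max t (t ^ p) := by ring
  have hlt : σ / ((p+1).factorial : ℝ) * t ^ (p+1) < 2 * Lbar * max t (t ^ p) :=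
    lt_of_lt_of_le hs hdec
  rcases eq_or_lt_of_le ht0 with h0 | h0
  · rw [← h0]
    exact le_max_of_le_left hM0.le
  rcases le_total t 1 with h1 | h1
  · -- t ≤ 1, max = t
    have hmx : max t (t ^ p) = t := max_eq_left (by
      calc t ^ p ≤ t ^ 1 := pow_le_pow_of_le_one ht0 h1 hp
        _ = t := pow_one t)
    rw [hmx, pow_succ] at hlt
    have h2 : σ / ((p+1).factorial : ℝ) * t ^ p < 2 * Lbar := by
      have h' : σ / ((p+1).factorial : ℝ) * t ^ p * t < 2 * Lbar * t := by
        calc σ / ((p+1).factorial : ℝ) * t ^ p * t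
            = σ / ((p+1).factorial : ℝ) * (t ^ p * t) := by ring
          _ < 2 * Lbar * t := hlt
      exact lt_of_mul_lt_mul_right h' h0.le
    have htpM : t ^ p < M := by
      rw [hMdef, lt_div_iff₀ hσmin]
      rw [div_mul_eq_mul_div, div_lt_iff₀ hfac] at h2
      have htp0 : (0:ℝ) ≤ t ^ p := by positivity
      nlinarith
    have hp0 : (p:ℝ) ≠ 0 := by positivity
    have ht' : t = (t ^ p : ℝ) ^ ((1:ℝ)/p) := by
      rw [← Real.rpow_natCast t p, ← Real.rpow_mul ht0, mul_one_div, div_self hp0,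
        Real.rpow_one]
    refine le_max_of_le_right ?_
    rw [ht']
    exact Real.rpow_le_rpow (by positivity) htpM.le (by positivity)
  · -- 1 ≤ t, max = t^p
    have hmx : max t (t ^ p) = t ^ p := max_eq_right (by
      calc t = t ^ 1 := (pow_one t).symm
        _ ≤ t ^ p := pow_le_pow_right₀ h1 hp)
    rw [hmx, pow_succ] at hlt
    have htp0 : (0:ℝ) < t ^ p := by positivity
    have h2 : σ / ((p+1).factorial : ℝ) * t < 2 * Lbar := by
      have h' : σ / ((p+1).factorial : ℝ) * t * t ^ p < 2 * Lbar * t ^ p := by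
        calc σ / ((p+1).factorial : ℝ) * t * t ^ p
            = σ / ((p+1).factorial : ℝ) * (t ^ p * t) := by ring
          _ < 2 * Lbar * t ^ p := hlt
      exact lt_of_mul_lt_mul_right h' htp0.le
    have htM : t < M := by
      rw [hMdef, lt_div_iff₀ hσmin]
      rw [div_mul_eq_mul_div, div_lt_iff₀ hfac] at h2
      nlinarith
    exact le_max_of_le_left htM.le
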